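/- Let Γ : D^m → D^n be continuous and define C_Γ = {(x,y) : Γ(β)ᵀx − βᵀy ≥ 0 for all β ∈ D^m}. If C_Γ is full-dimensional (has nonempty interior), then (0,0) ∉ conv({(Γ(β), −β) : β ∈ D^m}). -/
import Mathlib


open scoped RealInnerProductSpace

theorem stmt6 (n m : ℕ)
    (Γ : EuclideanSpace ℝ (Fin m) → EuclideanSpace ℝ (Fin n))
    (hΓ : ∀ β : EuclideanSpace ℝ (Fin m), ‖β‖ = 1 → ‖Γ β‖ = 1)
    (hcont : ContinuousOn Γ {β | ‖β‖ = 1})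
    (C : Set (EuclideanSpace ℝ (Fin n) × EuclideanSpace ℝ (Fin m)))
    (hC : C = {p | ∀ β : EuclideanSpace ℝ (Fin m), ‖β‖ = 1 →
      0 ≤ ⟪Γ β, p.1⟫ - ⟪β, p.2⟫})
    (hfull : (interior C).Nonempty) :
    ((0 : EuclideanSpace ℝ (Fin n)), (0 : EuclideanSpace ℝ (Fin m))) ∉
      convexHull ℝ {p : EuclideanSpace ℝ (Fin n) × EuclideanSpace ℝ (Fin m) |
        ∃ β, ‖β‖ = 1 ∧ p = (Γ β, -β)} := by
  obtain ⟨p, hp⟩ := hfull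
  obtain ⟨ε, hε, hball⟩ := Metric.isOpen_iff.mp isOpen_interior p hp
  have hballC : Metric.ball p ε ⊆ C := hball.trans interior_subset
  set x := p.1 with hx
  set y := p.2 with hy
  have key : ∀ β : EuclideanSpace ℝ (Fin m), ‖β‖ = 1 → ε ≤ ⟪Γ β, x⟫ - ⟪β, y⟫ := by
    intro β hβ
    set t := ε / 2 with ht
    have ht0 : 0 < t := by positivity
    have hqball : (x - t • Γ β, y + t • β) ∈ Metric.ball p ε := by
      rw [Metric.mem_ball, dist_eq_norm]
      have hdiff : (x - t • Γ β, y + t • β) - p = (-(t • Γ β), t • β) := by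
        have : p = (x, y) := rfl
        rw [this, Prod.mk_sub_mk]
        congr 1 <;> abel
      rw [hdiff, Prod.norm_def]
      simp only [norm_neg, norm_smul, Real.norm_eq_abs, abs_of_pos ht0, hΓ β hβ, hβ,
        mul_one]
      simp [max_self]
      linarith
    have hqC := hballC hqball
    rw [hC] at hqC
    have h := hqC β hβ
    simp only at h
    rw [inner_sub_right, inner_add_right, real_inner_smul_right, real_inner_smul_right,
      real_inner_self_eq_norm_sq, real_inner_self_eq_norm_sq, hΓ β hβ, hβ] at h
    -- h : 0 ≤ (⟪Γ β, x⟫ - t * 1^2) - (⟪β, y⟫ + t * 1^2)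
    nlinarith [h]
  intro hmem
  have hconv : Convex ℝ {q : EuclideanSpace ℝ (Fin n) × EuclideanSpace ℝ (Fin m) |
      ε ≤ ⟪q.1, x⟫ + ⟪q.2, y⟫} := by
    apply convex_halfSpace_ge
    exact { map_add := fun a b => by simp [inner_add_left]; ring
            map_smul := fun c a => by simp [real_inner_smul_left, Finset.mul_sum, mul_add, mul_assoc] }
  have hsub : convexHull ℝ {p : EuclideanSpace ℝ (Fin n) × EuclideanSpace ℝ (Fin m) |
        ∃ β, ‖β‖ = 1 ∧ p = (Γ β, -β)} ⊆
      {q | ε ≤ ⟪q.1, x⟫ + ⟪q.2, y⟫} := by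
    apply convexHull_min _ hconv
    rintro q ⟨β, hβ, rfl⟩
    have h := key β hβ
    simp only [Set.mem_setOf_eq, inner_neg_left]
    linarith
  have h0 := hsub hmem
  simp only [Set.mem_setOf_eq, inner_zero_left, add_zero] at h0
  linarith
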